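/- If the initializing subset A^S of EHD contains all boundary points of vrs(A) that lie in A (in particular all of the frame F), then every point of A \ A^S lies in vrs(B^S) = vrs(A), so extB^S = ∅ and Step 4 classifies no new points: B^S already equals the set B of boundary DMUs of the full hull. -/
import Mathlib


open scoped Classical
open Finset

noncomputable section

/-- The VRS (free-disposal convex) hull of a finite set of points in ℝ^m. -/
def vrs {m : ℕ} (S : Finset (Fin m → ℝ)) : Set (Fin m → ℝ) :=
  {z | ∃ l : (Fin m → ℝ) → ℝ, (∀ a, 0 ≤ l a) ∧ (∑ a ∈ S, l a) = 1 ∧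
    ∀ k, z k ≤ ∑ a ∈ S, l a * a k}

/-- The frame of `A`: the points of `A` that are extreme points of `vrs A`. -/
def frame {m : ℕ} (A : Finset (Fin m → ℝ)) : Finset (Fin m → ℝ) :=
  A.filter fun a => a ∈ Set.extremePoints ℝ (vrs A)

lemma mem_vrs_self {m : ℕ} {A : Finset (Fin m → ℝ)} {a : Fin m → ℝ} (ha : a ∈ A) :
    a ∈ vrs A := by
  refine ⟨fun b => if b = a then 1 else 0, ?_, ?_, ?_⟩
  · intro b; dsimp only; split <;> norm_num
  · simp [Finset.sum_ite_eq', ha]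
  · intro k
    have : ∑ b ∈ A, (if b = a then (1:ℝ) else 0) * b k
        = ∑ b ∈ A, (if b = a then b k else 0) := by
      apply Finset.sum_congr rfl; intro b _; split <;> simp
    rw [this, Finset.sum_ite_eq' A a (fun b => b k)]
    simp [ha]

lemma vrs_mono {m : ℕ} {S T : Finset (Fin m → ℝ)} (h : S ⊆ T) : vrs S ⊆ vrs T := by
  rintro z ⟨l, hl0, hl1, hl2⟩
  refine ⟨fun b => if b ∈ S then l b else 0, ?_, ?_, ?_⟩
  · intro b; dsimp only; split
    · exact hl0 b
    · exact le_refl 0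
  · rw [Finset.sum_ite_mem, Finset.inter_eq_right.mpr h]; exact hl1
  · intro k
    have : ∑ b ∈ T, (if b ∈ S then l b else 0) * b k
        = ∑ b ∈ T, (if b ∈ S then l b * b k else 0) := by
      apply Finset.sum_congr rfl; intro b _; split <;> simp
    rw [this, Finset.sum_ite_mem, Finset.inter_eq_right.mpr h]
    exact hl2 k

lemma vrs_trans {m : ℕ} {S T : Finset (Fin m → ℝ)} (h : ∀ s ∈ S, s ∈ vrs T) :
    vrs S ⊆ vrs T := by
  rintro z ⟨l, hl0, hl1, hl2⟩
  have h' : ∀ s : Fin m → ℝ, ∃ μ : (Fin m → ℝ) → ℝ, s ∈ S →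
      ((∀ a, 0 ≤ μ a) ∧ (∑ a ∈ T, μ a) = 1 ∧ ∀ k, s k ≤ ∑ a ∈ T, μ a * a k) := by
    intro s
    by_cases hs : s ∈ S
    · obtain ⟨μ, hμ⟩ := h s hs; exact ⟨μ, fun _ => hμ⟩
    · exact ⟨fun _ => 0, fun hs' => absurd hs' hs⟩
  choose μ hμ using h'
  refine ⟨fun t => ∑ s ∈ S, l s * μ s t, ?_, ?_, ?_⟩
  · intro t
    apply Finset.sum_nonneg; intro s hs
    exact mul_nonneg (hl0 s) ((hμ s hs).1 t)
  · rw [Finset.sum_comm]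
    calc ∑ s ∈ S, ∑ t ∈ T, l s * μ s t
        = ∑ s ∈ S, l s * ∑ t ∈ T, μ s t := by simp [Finset.mul_sum]
      _ = ∑ s ∈ S, l s := Finset.sum_congr rfl fun s hs => by rw [(hμ s hs).2.1, mul_one]
      _ = 1 := hl1
  · intro k
    calc z k ≤ ∑ s ∈ S, l s * s k := hl2 k
      _ ≤ ∑ s ∈ S, l s * ∑ t ∈ T, μ s t * t k :=
          Finset.sum_le_sum fun s hs =>
            mul_le_mul_of_nonneg_left ((hμ s hs).2.2 k) (hl0 s)
      _ = ∑ s ∈ S, ∑ t ∈ T, l s * μ s t * t k := by simp [Finset.mul_sum, mul_assoc]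
      _ = ∑ t ∈ T, ∑ s ∈ S, l s * μ s t * t k := Finset.sum_comm
      _ = ∑ t ∈ T, (∑ s ∈ S, l s * μ s t) * t k := by simp [Finset.sum_mul]

lemma mem_vrs_erase {m : ℕ} (hm : 0 < m) {A : Finset (Fin m → ℝ)} {a : Fin m → ℝ}
    (ha : a ∈ A) (hi : a ∈ interior (vrs A)) : a ∈ vrs (A.erase a) := by
  obtain ⟨ε, hε, hball⟩ : ∃ ε > 0, Metric.ball a ε ⊆ vrs A :=
    Metric.mem_nhds_iff.mp (mem_interior_iff_mem_nhds.mp hi)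
  have hy : (fun k => a k + ε / 2) ∈ vrs A := by
    apply hball
    rw [Metric.mem_ball, dist_pi_lt_iff hε]
    intro i
    rw [Real.dist_eq]
    have : a i + ε / 2 - a i = ε / 2 := by ring
    rw [this, abs_of_pos (by linarith)]
    linarith
  obtain ⟨l, hl0, hl1, hl2⟩ := hy
  have hsplit : l a + ∑ b ∈ A.erase a, l b = 1 := by
    rw [Finset.add_sum_erase A l ha]; exact hl1
  by_cases hc : l a < 1
  · have h1c : 0 < 1 - l a := by linarith
    refine ⟨fun b => l b / (1 - l a), fun b => div_nonneg (hl0 b) h1c.le, ?_, ?_⟩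
    · have hsum : ∑ b ∈ A.erase a, l b = 1 - l a := by linarith
      rw [← Finset.sum_div, hsum, div_self h1c.ne']
    · intro k
      have hk : a k + ε / 2 ≤ ∑ b ∈ A, l b * b k := by simpa using hl2 k
      have hsplitk : l a * a k + ∑ b ∈ A.erase a, l b * b k = ∑ b ∈ A, l b * b k :=
        Finset.add_sum_erase A (fun b => l b * b k) ha
      have hkey : (1 - l a) * a k ≤ ∑ b ∈ A.erase a, l b * b k := by nlinarith
      have hsum : ∑ b ∈ A.erase a, l b / (1 - l a) * b k
          = (∑ b ∈ A.erase a, l b * b k) / (1 - l a) := by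
        rw [Finset.sum_div]
        apply Finset.sum_congr rfl; intro b _; ring
      rw [hsum, le_div_iff₀ h1c]
      nlinarith
  · have hge : (1:ℝ) ≤ l a := not_lt.mp hc
    exfalso
    have hsum0 : ∑ b ∈ A.erase a, l b = 0 :=
      le_antisymm (by linarith) (Finset.sum_nonneg fun b _ => hl0 b)
    have hb0 := (Finset.sum_eq_zero_iff_of_nonneg (fun b _ => hl0 b)).mp hsum0
    have hc1 : l a = 1 := by
      have := Finset.sum_nonneg (fun b (_ : b ∈ A.erase a) => hl0 b)
      linarith
    have hk : a ⟨0, hm⟩ + ε / 2 ≤ ∑ b ∈ A, l b * b ⟨0, hm⟩ := by simpa using hl2 ⟨0, hm⟩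
    have : ∑ b ∈ A, l b * b ⟨0, hm⟩ = a ⟨0, hm⟩ := by
      rw [← Finset.add_sum_erase A (fun b => l b * b ⟨0, hm⟩) ha,
        Finset.sum_eq_zero (fun b hb => by rw [hb0 b hb, zero_mul]), hc1]
      ring
    linarith

lemma vrs_filter_not_interior {m : ℕ} (hm : 0 < m) (A : Finset (Fin m → ℝ)) :
    vrs (A.filter fun a => a ∉ interior (vrs A)) = vrs A := by
  induction A using Finset.strongInduction with
  | _ A ih =>
    by_cases h : ∀ a ∈ A, a ∉ interior (vrs A)
    · rw [Finset.filter_true_of_mem h]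
    · push_neg at h
      obtain ⟨a, haA, hai⟩ := h
      have hsub : A.erase a ⊆ A := Finset.erase_subset a A
      have hv : vrs (A.erase a) = vrs A := by
        apply Set.Subset.antisymm (vrs_mono hsub)
        apply vrs_trans
        intro b hb
        by_cases hba : b = a
        · subst hba; exact mem_vrs_erase hm haA hai
        · exact mem_vrs_self (Finset.mem_erase.mpr ⟨hba, hb⟩)
      have hfil : (A.filter fun b => b ∉ interior (vrs A))
          = ((A.erase a).filter fun b => b ∉ interior (vrs (A.erase a))) := by
        rw [hv]
        ext b
        simp only [Finset.mem_filter, Finset.mem_erase]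
        constructor
        · rintro ⟨hbA, hbi⟩
          exact ⟨⟨fun h => hbi (h ▸ hai), hbA⟩, hbi⟩
        · rintro ⟨⟨_, hbA⟩, hbi⟩
          exact ⟨hbA, hbi⟩
      rw [hfil, ih (A.erase a) (Finset.erase_ssubset haA), hv]

theorem stmt19 {m : ℕ} (hm : 0 < m) (A AS : Finset (Fin m → ℝ)) (hAS : AS ⊆ A)
    (hbd : ∀ a ∈ A, a ∈ frontier (vrs A) → a ∈ AS) :
    (∀ b ∈ A \ AS, b ∈ vrs (AS.filter fun a => a ∈ frontier (vrs AS))) ∧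
    vrs (AS.filter fun a => a ∈ frontier (vrs AS)) = vrs A ∧
    ((A \ AS).filter fun b =>
      b ∉ vrs (AS.filter fun a => a ∈ frontier (vrs AS))) = ∅ ∧
    (AS.filter fun a => a ∈ frontier (vrs AS)) =
      A.filter (fun a => a ∈ frontier (vrs A)) := by
  have hAfr_eq : (A.filter fun a => a ∈ frontier (vrs A))
      = (A.filter fun a => a ∉ interior (vrs A)) := by
    ext b
    simp only [Finset.mem_filter]
    constructor
    · rintro ⟨hbA, hbf⟩; exact ⟨hbA, hbf.2⟩
    · rintro ⟨hbA, hbi⟩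
      exact ⟨hbA, ⟨subset_closure (mem_vrs_self hbA), hbi⟩⟩
  have h1 : vrs (A.filter fun a => a ∈ frontier (vrs A)) = vrs A := by
    rw [hAfr_eq]; exact vrs_filter_not_interior hm A
  have hAfrAS : (A.filter fun a => a ∈ frontier (vrs A)) ⊆ AS := by
    intro b hb
    rw [Finset.mem_filter] at hb
    exact hbd b hb.1 hb.2
  have h2 : vrs AS = vrs A :=
    Set.Subset.antisymm (vrs_mono hAS) (h1 ▸ vrs_mono hAfrAS)
  have hBA : (AS.filter fun a => a ∈ frontier (vrs AS))
      = (A.filter fun a => a ∈ frontier (vrs A)) := by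
    ext b
    simp only [Finset.mem_filter, h2]
    constructor
    · rintro ⟨hbAS, hbf⟩; exact ⟨hAS hbAS, hbf⟩
    · rintro ⟨hbA, hbf⟩; exact ⟨hbd b hbA hbf, hbf⟩
  have h3 : vrs (AS.filter fun a => a ∈ frontier (vrs AS)) = vrs A := by
    rw [hBA, h1]
  have hmem : ∀ b ∈ A \ AS, b ∈ vrs (AS.filter fun a => a ∈ frontier (vrs AS)) := by
    intro b hb
    rw [h3]
    exact mem_vrs_self (Finset.mem_sdiff.mp hb).1
  refine ⟨hmem, h3, ?_, hBA⟩
  rw [Finset.filter_eq_empty_iff]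
  intro b hb
  exact not_not.mpr (hmem b hb)
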